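/- arXiv:1710.00797 — 5 statements merged into one kernel-verified Lean document; each statement's English description precedes it below -/
import Mathlib

section
/- Let f : ℝⁿ → ℝ be differentiable and L-smooth (i.e., ‖∇f(y) − ∇f(x)‖ ≤ L‖y − x‖ for all x, y, in the Euclidean norm), let x* be a global minimizer of f with f* = f(x*), and suppose f is α-weakly-quasi-convex with respect to x* for some α ∈ (0,1]. Let the sequence (x_k) be generated by gradient descent with fixed step length 1/L, i.e., x_{k+1} = x_k − (1/L)∇f(x_k), starting from x_0, and set R = ‖x_0 − x*‖. Then for every natural number T, f(x_T) − f* ≤ L·R²/(α·(T+1)). -/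
open scoped RealInnerProductSpace

section

variable {n : ℕ}

lemma fderiv_apply_eq_inner_gradient (f : EuclideanSpace ℝ (Fin n) → ℝ)
    (p w : EuclideanSpace ℝ (Fin n)) : fderiv ℝ f p w = ⟪gradient f p, w⟫ := by
  rw [gradient, ← InnerProductSpace.toDual_apply_apply,
    (InnerProductSpace.toDual ℝ (EuclideanSpace ℝ (Fin n))).apply_symm_apply]

lemma curve_hasDerivAt (f : EuclideanSpace ℝ (Fin n) → ℝ) (hdiff : Differentiable ℝ f)
    (x v : EuclideanSpace ℝ (Fin n)) (t : ℝ) :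
    HasDerivAt (fun s : ℝ => f (x + s • v)) ⟪gradient f (x + t • v), v⟫ t := by
  have h1 : HasDerivAt (fun s : ℝ => x + s • v) v t := by
    simpa using ((hasDerivAt_id t).smul_const v).const_add x
  have h2 := (hdiff (x + t • v)).hasFDerivAt.comp_hasDerivAt t h1
  rw [fderiv_apply_eq_inner_gradient] at h2
  exact h2

lemma descent_lemma (f : EuclideanSpace ℝ (Fin n) → ℝ) (hdiff : Differentiable ℝ f)
    (L : ℝ) (hL : 0 < L)
    (hsmooth : ∀ x y : EuclideanSpace ℝ (Fin n),
      ‖gradient f y - gradient f x‖ ≤ L * ‖y - x‖)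
    (x y : EuclideanSpace ℝ (Fin n)) :
    f y ≤ f x + ⟪gradient f x, y - x⟫ + L / 2 * ‖y - x‖ ^ 2 := by
  set v := y - x with hv
  set g : ℝ → ℝ := fun t => f (x + t • v) - t * ⟪gradient f x, v⟫ - L / 2 * t ^ 2 * ‖v‖ ^ 2
    with hg
  have hg' : ∀ t : ℝ, HasDerivAt g
      (⟪gradient f (x + t • v), v⟫ - ⟪gradient f x, v⟫ - L * t * ‖v‖ ^ 2) t := by
    intro t
    have h1 := curve_hasDerivAt f hdiff x v t
    have h2 : HasDerivAt (fun s : ℝ => s * ⟪gradient f x, v⟫) ⟪gradient f x, v⟫ t := by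
      simpa using (hasDerivAt_id t).mul_const ⟪gradient f x, v⟫
    have h3 : HasDerivAt (fun s : ℝ => L / 2 * s ^ 2 * ‖v‖ ^ 2) (L * t * ‖v‖ ^ 2) t := by
      have := ((hasDerivAt_pow 2 t).const_mul (L / 2)).mul_const (‖v‖ ^ 2)
      refine this.congr_deriv ?_
      rw [show (2:ℕ) - 1 = 1 from rfl, pow_one]
      push_cast
      ring
    exact (h1.sub h2).sub h3
  have mono : AntitoneOn g (Set.Icc (0:ℝ) 1) := by
    apply antitoneOn_of_deriv_nonpos (convex_Icc 0 1)
    · exact fun t _ => ((hg' t).differentiableAt).continuousAt.continuousWithinAt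
    · exact fun t _ => ((hg' t).differentiableAt).differentiableWithinAt
    · intro t ht
      rw [interior_Icc] at ht
      rw [(hg' t).deriv]
      have ht0 : (0:ℝ) ≤ t := ht.1.le
      have key : ⟪gradient f (x + t • v) - gradient f x, v⟫ ≤ L * t * ‖v‖ ^ 2 := by
        calc ⟪gradient f (x + t • v) - gradient f x, v⟫
            ≤ ‖gradient f (x + t • v) - gradient f x‖ * ‖v‖ := real_inner_le_norm _ _
          _ ≤ (L * ‖(x + t • v) - x‖) * ‖v‖ :=
              mul_le_mul_of_nonneg_right (hsmooth x (x + t • v)) (norm_nonneg _)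
          _ = L * t * ‖v‖ ^ 2 := by
              rw [add_sub_cancel_left, norm_smul, Real.norm_eq_abs, abs_of_nonneg ht0]
              ring
      rw [inner_sub_left] at key
      linarith
  have h01 := mono (Set.left_mem_Icc.mpr zero_le_one) (Set.right_mem_Icc.mpr zero_le_one)
    zero_le_one
  have e0 : g 0 = f x := by simp [hg]
  have e1 : g 1 = f y - ⟪gradient f x, v⟫ - L / 2 * ‖v‖ ^ 2 := by
    simp [hg, hv]
  rw [e0, e1] at h01
  linarith

end

theorem gradient_descent_wqc
    (n : ℕ) (f : EuclideanSpace ℝ (Fin n) → ℝ)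
    (hdiff : Differentiable ℝ f)
    (L : ℝ) (hL : 0 < L)
    (hsmooth : ∀ x y : EuclideanSpace ℝ (Fin n),
      ‖gradient f y - gradient f x‖ ≤ L * ‖y - x‖)
    (xstar : EuclideanSpace ℝ (Fin n))
    (hmin : ∀ x, f xstar ≤ f x)
    (α : ℝ) (hα : α ∈ Set.Ioc (0 : ℝ) 1)
    (hwqc : ∀ x, α * (f x - f xstar) ≤ ⟪gradient f x, x - xstar⟫)
    (x : ℕ → EuclideanSpace ℝ (Fin n))
    (hstep : ∀ k : ℕ, x (k + 1) = x k - (1 / L) • gradient f (x k))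
    (R : ℝ) (hR : R = ‖x 0 - xstar‖) :
    ∀ T : ℕ, f (x T) - f xstar ≤ L * R ^ 2 / (α * (T + 1)) := by
  obtain ⟨hα0, hα1⟩ := hα
  have hLinv : L * (1 / L) = 1 := mul_one_div_cancel hL.ne'
  set δ : ℕ → ℝ := fun k => f (x k) - f xstar with hδ
  set G : ℕ → ℝ := fun k => ‖gradient f (x k)‖ with hG
  set r : ℕ → ℝ := fun k => ‖x k - xstar‖ with hr
  have hδnonneg : ∀ k, 0 ≤ δ k := fun k => sub_nonneg.mpr (hmin (x k))
  -- gradient at the minimizer vanishes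
  have hgradstar : gradient f xstar = 0 := by
    have hloc : IsLocalMin f xstar := Filter.Eventually.of_forall hmin
    rw [gradient, hloc.fderiv_eq_zero, map_zero]
  -- δ 0 ≤ L/2 * R^2
  have hδ0 : 2 * δ 0 ≤ L * R ^ 2 := by
    have := descent_lemma f hdiff L hL hsmooth xstar (x 0)
    rw [hgradstar] at this
    simp only [inner_zero_left] at this
    have : f (x 0) ≤ f xstar + L / 2 * ‖x 0 - xstar‖ ^ 2 := by linarith
    rw [hR]
    simp only [hδ]
    linarith
  -- per-step descent: G k ^ 2 ≤ 2 * L * (δ k - δ (k+1))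
  have hstep_sub : ∀ k, x (k + 1) - x k = -((1 / L) • gradient f (x k)) := by
    intro k; rw [hstep k]; abel
  have hdesc : ∀ k, G k ^ 2 ≤ 2 * L * (δ k - δ (k + 1)) := by
    intro k
    have hd := descent_lemma f hdiff L hL hsmooth (x k) (x (k + 1))
    rw [hstep_sub k] at hd
    rw [inner_neg_right, real_inner_smul_right, real_inner_self_eq_norm_sq, norm_neg,
      norm_smul, Real.norm_eq_abs, abs_of_nonneg (by positivity : (0:ℝ) ≤ 1 / L)] at hd
    have hd' : f (x (k + 1)) ≤ f (x k) - (1 / L) * ‖gradient f (x k)‖ ^ 2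
        + L / 2 * ((1 / L) ^ 2 * ‖gradient f (x k)‖ ^ 2) := by
      rw [mul_pow] at hd; linarith
    have e : (1 / L) * ‖gradient f (x k)‖ ^ 2
        - L / 2 * ((1 / L) ^ 2 * ‖gradient f (x k)‖ ^ 2)
        = 1 / (2 * L) * ‖gradient f (x k)‖ ^ 2 := by
      field_simp; ring
    have hhalf : 1 / (2 * L) * G k ^ 2 ≤ δ k - δ (k + 1) := by
      simp only [hδ, hG]
      linarith
    calc G k ^ 2 = (2 * L) * (1 / (2 * L) * G k ^ 2) := by field_simp
      _ ≤ 2 * L * (δ k - δ (k + 1)) :=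
          mul_le_mul_of_nonneg_left hhalf (by positivity)
  -- distance recursion
  have hkey : ∀ k, L * r (k + 1) ^ 2 ≤ L * r k ^ 2 - 2 * α * δ k + 2 * (δ k - δ (k + 1)) := by
    intro k
    have hx : x (k + 1) - xstar = (x k - xstar) - (1 / L) • gradient f (x k) := by
      rw [hstep k]; abel
    have hexp : r (k + 1) ^ 2 = r k ^ 2
        - 2 * ((1 / L) * ⟪gradient f (x k), x k - xstar⟫)
        + (1 / L) ^ 2 * G k ^ 2 := by
      simp only [hr, hG, hx]
      rw [norm_sub_sq_real, real_inner_smul_right, real_inner_comm, norm_smul,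
        Real.norm_eq_abs, abs_of_nonneg (by positivity : (0:ℝ) ≤ 1 / L), mul_pow]
    have hw := hwqc (x k)
    have hd := hdesc k
    have h1 : L * ((1 / L) * ⟪gradient f (x k), x k - xstar⟫)
        = ⟪gradient f (x k), x k - xstar⟫ := by
      rw [← mul_assoc, hLinv, one_mul]
    have h2 : L * ((1 / L) ^ 2 * G k ^ 2) = (1 / L) * G k ^ 2 := by
      field_simp
    have h3 : (1 / L) * G k ^ 2 ≤ 2 * (δ k - δ (k + 1)) := by
      calc (1 / L) * G k ^ 2 ≤ (1 / L) * (2 * L * (δ k - δ (k + 1))) := by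
            exact mul_le_mul_of_nonneg_left (hdesc k) (by positivity)
        _ = (L * (1 / L)) * (2 * (δ k - δ (k + 1))) := by ring
        _ = 2 * (δ k - δ (k + 1)) := by rw [hLinv, one_mul]
    have hδk : α * δ k ≤ ⟪gradient f (x k), x k - xstar⟫ := hw
    calc L * r (k + 1) ^ 2
        = L * r k ^ 2 - 2 * (L * ((1 / L) * ⟪gradient f (x k), x k - xstar⟫))
          + L * ((1 / L) ^ 2 * G k ^ 2) := by rw [hexp]; ring
      _ ≤ L * r k ^ 2 - 2 * (α * δ k) + 2 * (δ k - δ (k + 1)) := by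
          rw [h1, h2]; linarith
      _ = L * r k ^ 2 - 2 * α * δ k + 2 * (δ k - δ (k + 1)) := by ring
  -- δ is antitone
  have hδanti : ∀ j k, j ≤ k → δ k ≤ δ j := by
    have hsucc : ∀ k, δ (k + 1) ≤ δ k := by
      intro k
      have := hdesc k
      nlinarith [sq_nonneg (G k), hL]
    intro j k hjk
    exact (antitone_nat_of_succ_le hsucc) hjk
  -- telescoped sum bound
  have hsum : ∀ T : ℕ, 2 * α * (∑ k ∈ Finset.range (T + 1), δ k)
      + L * r (T + 1) ^ 2 + 2 * δ (T + 1) ≤ L * R ^ 2 + 2 * δ 0 := by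
    intro T
    induction T with
    | zero =>
      have hk0 := hkey 0
      have hr0 : L * r 0 ^ 2 = L * R ^ 2 := by rw [show r 0 = R from hR.symm]
      have e : ∑ k ∈ Finset.range (0 + 1), δ k = δ 0 := by simp
      rw [e]
      linarith
    | succ T ih =>
      have := hkey (T + 1)
      rw [Finset.sum_range_succ]
      linarith
  intro T
  have hS : (T + 1 : ℝ) * δ T ≤ ∑ k ∈ Finset.range (T + 1), δ k := by
    have : ∀ k ∈ Finset.range (T + 1), δ T ≤ δ k := by
      intro k hk
      exact hδanti k T (Nat.lt_succ_iff.mp (Finset.mem_range.mp hk))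
    have h := Finset.card_nsmul_le_sum (Finset.range (T + 1)) δ (δ T) this
    simpa [nsmul_eq_mul] using h
  have hfinal : 2 * α * ((T + 1 : ℝ) * δ T) ≤ 2 * (L * R ^ 2) := by
    have h1 := hsum T
    have h2 : 2 * α * ((T + 1 : ℝ) * δ T) ≤ 2 * α * (∑ k ∈ Finset.range (T + 1), δ k) :=
      mul_le_mul_of_nonneg_left hS (by positivity)
    nlinarith [hδnonneg (T + 1), sq_nonneg (r (T + 1)), hL.le, sq_nonneg R, hδ0]
  have hpos : (0:ℝ) < α * (T + 1) := by positivity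
  rw [le_div_iff₀ hpos]
  simp only [hδ] at hfinal
  nlinarith [hfinal]
end

section
/- Let f : ℝⁿ → ℝ be differentiable with a global minimizer x*. If f is 1-weakly-quasi-convex with respect to x*, i.e., f(x) − f(x*) ≤ ⟨∇f(x), x − x*⟩ for all x, then f is star-convex with respect to x*, i.e., f(λx* + (1−λ)x) ≤ λf(x*) + (1−λ)f(x) for all x ∈ ℝⁿ and all λ ∈ [0,1]. -/
open scoped RealInnerProductSpace

theorem one_wqc_implies_star_convex
    (n : ℕ) (f : EuclideanSpace ℝ (Fin n) → ℝ)
    (hdiff : Differentiable ℝ f)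
    (xstar : EuclideanSpace ℝ (Fin n))
    (hmin : ∀ x, f xstar ≤ f x)
    (hwqc : ∀ x, f x - f xstar ≤ ⟪gradient f x, x - xstar⟫) :
    ∀ (x : EuclideanSpace ℝ (Fin n)) (lam : ℝ), lam ∈ Set.Icc (0 : ℝ) 1 →
      f (lam • xstar + (1 - lam) • x) ≤ lam * f xstar + (1 - lam) * f x := by
  intro x lam hlam
  obtain ⟨hl0, hl1⟩ := hlam
  set c : EuclideanSpace ℝ (Fin n) := x - xstar with hc
  set γ : ℝ → EuclideanSpace ℝ (Fin n) := fun t => xstar + t • c with hγ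
  set g : ℝ → ℝ := fun t => f (γ t) with hg
  -- derivative of g
  have hγd : ∀ t : ℝ, HasDerivAt γ c t := by
    intro t
    simpa [hγ] using ((hasDerivAt_id t).smul_const c).const_add xstar
  have hgd : ∀ t : ℝ, HasDerivAt g (⟪gradient f (γ t), c⟫) t := by
    intro t
    have hf := (hdiff (γ t)).hasFDerivAt
    have := hf.comp_hasDerivAt t (hγd t)
    have hval : (fderiv ℝ f (γ t)) c = ⟪gradient f (γ t), c⟫ := by
      simp only [gradient, ← InnerProductSpace.toDual_apply_apply,
        LinearIsometryEquiv.apply_symm_apply]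
    rwa [hval] at this
  -- key inequality: g t - g 0 ≤ t * (g 1 - g 0) for t ∈ [0,1]
  have key : ∀ t ∈ Set.Icc (0:ℝ) 1, g t - g 0 ≤ t * (g 1 - g 0) := by
    intro t ht
    rcases eq_or_lt_of_le ht.1 with h0 | h0
    · simp [← h0]
    · -- φ s = (g s - g 0)/s is monotone on [t,1]
      set φ : ℝ → ℝ := fun s => (g s - g 0) * s⁻¹ with hφ
      have hφd : ∀ s ∈ Set.Icc t 1, HasDerivAt φ
          ((⟪gradient f (γ s), c⟫) * s⁻¹ + (g s - g 0) * (-(s^2)⁻¹)) s := by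
        intro s hs
        have hs0 : s ≠ 0 := ne_of_gt (lt_of_lt_of_le h0 hs.1)
        exact ((hgd s).sub_const (g 0)).mul ((hasDerivAt_inv hs0))
      have hderiv_nonneg : ∀ s ∈ Set.Icc t 1,
          0 ≤ (⟪gradient f (γ s), c⟫) * s⁻¹ + (g s - g 0) * (-(s^2)⁻¹) := by
        intro s hs
        have hsp : 0 < s := lt_of_lt_of_le h0 hs.1
        have hw := hwqc (γ s)
        have hγs : γ s - xstar = s • c := by simp [hγ]
        rw [hγs] at hw
        have hinner : ⟪gradient f (γ s), s • c⟫ = s * ⟪gradient f (γ s), c⟫ := by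
          rw [real_inner_smul_right]
        rw [hinner] at hw
        have hg0 : g 0 = f xstar := by simp [hg, hγ, hc]
        -- hw : g s - g 0 ≤ s * inner
        have hw' : g s - g 0 ≤ s * ⟪gradient f (γ s), c⟫ := by
          rw [hg0]; exact hw
        have h1 : (g s - g 0) / s ≤ ⟪gradient f (γ s), c⟫ := by
          rw [div_le_iff₀ hsp]; linarith [hw']
        have : (⟪gradient f (γ s), c⟫) * s⁻¹ + (g s - g 0) * (-(s^2)⁻¹)
            = (⟪gradient f (γ s), c⟫ - (g s - g 0)/s) / s := by
          field_simp; ring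
        rw [this]
        exact div_nonneg (by linarith) hsp.le
      have hmono : MonotoneOn φ (Set.Icc t 1) := by
        apply monotoneOn_of_deriv_nonneg (convex_Icc t 1)
        · exact ContinuousOn.mono (fun s hs => ((hφd s hs).continuousAt.continuousWithinAt)) (by intro a ha; exact ha)
        · intro s hs
          rw [interior_Icc] at hs
          exact ((hφd s (Set.Ioo_subset_Icc_self hs)).differentiableAt).differentiableWithinAt
        · intro s hs
          rw [interior_Icc] at hs
          rw [(hφd s (Set.Ioo_subset_Icc_self hs)).deriv]
          exact hderiv_nonneg s (Set.Ioo_subset_Icc_self hs)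
      have := hmono (Set.mem_Icc.mpr ⟨le_refl t, ht.2⟩) (Set.mem_Icc.mpr ⟨ht.2, le_refl 1⟩) ht.2
      simp only [hφ, inv_one, mul_one] at this
      calc g t - g 0 = ((g t - g 0) * t⁻¹) * t := by field_simp
        _ ≤ (g 1 - g 0) * t := by
            apply mul_le_mul_of_nonneg_right this (le_of_lt h0)
        _ = t * (g 1 - g 0) := mul_comm _ _
  -- conclude
  have hpt : γ (1 - lam) = lam • xstar + (1 - lam) • x := by
    simp only [hγ, hc]
    module
  have h1 : g 1 = f x := by simp [hg, hγ, hc]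
  have h0 : g 0 = f xstar := by simp [hg, hγ, hc]
  have := key (1 - lam) ⟨by linarith, by linarith⟩
  rw [h1, h0] at this
  have : f (γ (1 - lam)) ≤ lam * f xstar + (1 - lam) * f x := by
    simp only [hg] at this
    nlinarith [this]
  rwa [hpt] at this
end

section
/- Let f : ℝⁿ → ℝ be differentiable and L-smooth, with nonempty solution set X* and minimum value f*. Let x_0 ∈ ℝⁿ, let x* = P(x_0) be the point of X* closest to x_0, and suppose f is α-weakly-quasi-convex with respect to x* with constant α ∈ (0,1] and satisfies the quadratic growth condition with constant μ > 0. Consider the conjugate-gradient-type iteration: q_0 = 0, and for each k, x̂_k is a global minimizer of f over the affine subspace x_0 + span{x_k − x_0, q_k}, x_{k+1} = x̂_k − (1/L)∇f(x̂_k), and q_{k+1} = q_k + ∇f(x̂_k). Then for T = ⌈(4/(3α))·√(L/μ)⌉, one has f(x_T) − f* ≤ (3/4)·(f(x_0) − f*). -/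
open scoped RealInnerProductSpace


lemma line_hasDerivAt {n : ℕ} {f : EuclideanSpace ℝ (Fin n) → ℝ}
    (hdiff : Differentiable ℝ f) (c u : EuclideanSpace ℝ (Fin n)) (t : ℝ) :
    HasDerivAt (fun s : ℝ => f (c + s • u)) ⟪gradient f (c + t • u), u⟫ t := by
  have hline : HasDerivAt (fun s : ℝ => c + s • u) u t := by
    simpa using ((hasDerivAt_id t).smul_const u).const_add c
  have hf := (hdiff (c + t • u)).hasGradientAt.hasFDerivAt
  have := hf.comp_hasDerivAt t hline
  simpa [InnerProductSpace.toDual_apply_apply, Function.comp_def] using this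

lemma inner_grad_eq_zero_of_line_min {n : ℕ} {f : EuclideanSpace ℝ (Fin n) → ℝ}
    (hdiff : Differentiable ℝ f) (c u : EuclideanSpace ℝ (Fin n))
    (hmin : ∀ t : ℝ, f c ≤ f (c + t • u)) :
    ⟪gradient f c, u⟫ = 0 := by
  have hd := line_hasDerivAt hdiff c u 0
  rw [zero_smul, add_zero] at hd
  have hloc : IsLocalMin (fun s : ℝ => f (c + s • u)) 0 := by
    apply Filter.Eventually.of_forall
    intro t; simpa using hmin t
  exact hloc.hasDerivAt_eq_zero hd

lemma smooth_upper_bound {n : ℕ} {f : EuclideanSpace ℝ (Fin n) → ℝ}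
    (hdiff : Differentiable ℝ f) {L : ℝ} (hL : 0 < L)
    (hsmooth : ∀ x y : EuclideanSpace ℝ (Fin n),
      ‖gradient f y - gradient f x‖ ≤ L * ‖y - x‖)
    (x y : EuclideanSpace ℝ (Fin n)) :
    f y ≤ f x + ⟪gradient f x, y - x⟫ + L / 2 * ‖y - x‖ ^ 2 := by
  set u := y - x with hu
  set φ : ℝ → ℝ := fun t => f (x + t • u) - t * ⟪gradient f x, u⟫ - L / 2 * t ^ 2 * ‖u‖ ^ 2
    with hφ
  have hφ' : ∀ t : ℝ, HasDerivAt φ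
      (⟪gradient f (x + t • u), u⟫ - ⟪gradient f x, u⟫ - L * t * ‖u‖ ^ 2) t := by
    intro t
    have h1 := line_hasDerivAt hdiff x u t
    have h2 : HasDerivAt (fun s : ℝ => s * ⟪gradient f x, u⟫) ⟪gradient f x, u⟫ t := by
      simpa using (hasDerivAt_id t).mul_const ⟪gradient f x, u⟫
    have h3 : HasDerivAt (fun s : ℝ => L / 2 * s ^ 2 * ‖u‖ ^ 2) (L * t * ‖u‖ ^ 2) t := by
      have : HasDerivAt (fun s : ℝ => s ^ 2) (2 * t) t := by
        simpa using hasDerivAt_pow 2 t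
      have := (this.const_mul (L / 2)).mul_const (‖u‖ ^ 2)
      exact this.congr_deriv (by ring)
    exact (h1.sub h2).sub h3
  have hanti : φ 1 ≤ φ 0 := by
    have : AntitoneOn φ (Set.Icc 0 1) := by
      apply antitoneOn_of_deriv_nonpos (convex_Icc 0 1)
      · exact Continuous.continuousOn (by
          have : Differentiable ℝ φ := fun t => (hφ' t).differentiableAt
          exact this.continuous)
      · intro t ht
        exact ((hφ' t).differentiableAt).differentiableWithinAt
      · intro t ht
        rw [(hφ' t).deriv]
        rw [interior_Icc] at ht
        have hb : ⟪gradient f (x + t • u) - gradient f x, u⟫ ≤ L * t * ‖u‖ ^ 2 := by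
          calc ⟪gradient f (x + t • u) - gradient f x, u⟫
              ≤ ‖gradient f (x + t • u) - gradient f x‖ * ‖u‖ := real_inner_le_norm _ _
            _ ≤ (L * ‖(x + t • u) - x‖) * ‖u‖ := by
                gcongr; exact hsmooth x (x + t • u)
            _ = L * t * ‖u‖ ^ 2 := by
                rw [add_sub_cancel_left, norm_smul, Real.norm_eq_abs,
                  abs_of_pos ht.1]; ring
        have hsub : ⟪gradient f (x + t • u), u⟫ - ⟪gradient f x, u⟫
            = ⟪gradient f (x + t • u) - gradient f x, u⟫ := by
          rw [inner_sub_left]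
        linarith [hsub ▸ hb]
    exact this (by norm_num) (by norm_num) (by norm_num)
  have h0 : φ 0 = f x := by simp [hφ]
  have h1 : φ 1 = f y - ⟪gradient f x, u⟫ - L / 2 * ‖u‖ ^ 2 := by
    simp [hφ, hu]
  rw [h0, h1] at hanti
  linarith

set_option maxHeartbeats 1000000 in
theorem nemirovski_cg_convergence
    (n : ℕ) (f : EuclideanSpace ℝ (Fin n) → ℝ)
    (hdiff : Differentiable ℝ f)
    (L : ℝ) (hL : 0 < L)
    (hsmooth : ∀ x y : EuclideanSpace ℝ (Fin n),
      ‖gradient f y - gradient f x‖ ≤ L * ‖y - x‖)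
    (Xstar : Set (EuclideanSpace ℝ (Fin n)))
    (hXstar : Xstar = {z | ∀ y, f z ≤ f y})
    (hne : Xstar.Nonempty)
    (fstar : ℝ) (hfstar : ∀ z ∈ Xstar, f z = fstar)
    -- P is the projection onto the solution set
    (P : EuclideanSpace ℝ (Fin n) → EuclideanSpace ℝ (Fin n))
    (hPmem : ∀ x, P x ∈ Xstar)
    (hPproj : ∀ x, ∀ z ∈ Xstar, ‖x - P x‖ ≤ ‖x - z‖)
    -- quadratic growth
    (μ : ℝ) (hμ : 0 < μ)
    (hQG : ∀ x, f x - fstar ≥ μ / 2 * ‖x - P x‖ ^ 2)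
    -- starting point and the minimizer x* = P(x₀)
    (x : ℕ → EuclideanSpace ℝ (Fin n))
    (xstar : EuclideanSpace ℝ (Fin n)) (hxstar : xstar = P (x 0))
    -- α-weak-quasi-convexity with respect to x*
    (α : ℝ) (hα : α ∈ Set.Ioc (0 : ℝ) 1)
    (hwqc : ∀ z, α * (f z - fstar) ≤ ⟪gradient f z, z - xstar⟫)
    -- the conjugate-gradient-type iteration
    (q xhat : ℕ → EuclideanSpace ℝ (Fin n))
    (hq0 : q 0 = 0)
    (hhatmem : ∀ k : ℕ, ∃ a b : ℝ, xhat k = x 0 + a • (x k - x 0) + b • q k)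
    (hhatmin : ∀ (k : ℕ) (a b : ℝ), f (xhat k) ≤ f (x 0 + a • (x k - x 0) + b • q k))
    (hstep : ∀ k : ℕ, x (k + 1) = xhat k - (1 / L) • gradient f (xhat k))
    (hqrec : ∀ k : ℕ, q (k + 1) = q k + gradient f (xhat k))
    (T : ℕ) (hT : T = ⌈(4 / (3 * α)) * Real.sqrt (L / μ)⌉₊) :
    f (x T) - fstar ≤ 3 / 4 * (f (x 0) - fstar) := by
  obtain ⟨hα0, hα1⟩ := hα
  set g : ℕ → EuclideanSpace ℝ (Fin n) := fun k => gradient f (xhat k) with hg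
  -- fstar is a lower bound
  have hfstar_le : ∀ y, fstar ≤ f y := by
    obtain ⟨z, hz⟩ := hne
    have hzmin : ∀ y, f z ≤ f y := by rw [hXstar] at hz; exact hz
    intro y
    rw [← hfstar z hz]
    exact hzmin y
  -- orthogonality relations
  have horth : ∀ k, ⟪g k, x k - x 0⟫ = 0 ∧ ⟪g k, q k⟫ = 0 := by
    intro k
    obtain ⟨a, b, hab⟩ := hhatmem k
    constructor
    · apply inner_grad_eq_zero_of_line_min hdiff
      intro t
      have : xhat k + t • (x k - x 0) = x 0 + (a + t) • (x k - x 0) + b • q k := by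
        rw [hab, add_smul]; abel
      rw [this]; exact hhatmin k (a + t) b
    · apply inner_grad_eq_zero_of_line_min hdiff
      intro t
      have : xhat k + t • q k = x 0 + a • (x k - x 0) + (b + t) • q k := by
        rw [hab, add_smul]; abel
      rw [this]; exact hhatmin k a (b + t)
  have horth3 : ∀ k, ⟪g k, xhat k - x 0⟫ = 0 := by
    intro k
    obtain ⟨a, b, hab⟩ := hhatmem k
    have : xhat k - x 0 = a • (x k - x 0) + b • q k := by rw [hab]; abel
    rw [this, inner_add_right, real_inner_smul_right, real_inner_smul_right,
      (horth k).1, (horth k).2]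
    ring
  -- descent lemma
  have hdesc : ∀ k, f (x (k + 1)) ≤ f (xhat k) - 1 / (2 * L) * ‖g k‖ ^ 2 := by
    intro k
    have hub := smooth_upper_bound hdiff hL hsmooth (xhat k) (x (k + 1))
    have hdiffpt : x (k + 1) - xhat k = -(1 / L) • g k := by
      rw [hstep k]; rw [neg_smul]; abel
    rw [hdiffpt] at hub
    have h1 : ⟪g k, (-(1 / L)) • g k⟫ = -(1 / L) * ‖g k‖ ^ 2 := by
      rw [real_inner_smul_right, real_inner_self_eq_norm_sq]
    have h2 : ‖(-(1 / L)) • g k‖ ^ 2 = (1 / L) ^ 2 * ‖g k‖ ^ 2 := by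
      rw [norm_smul, mul_pow, Real.norm_eq_abs]
      congr 1
      rw [abs_neg, abs_of_pos (by positivity : (0:ℝ) < 1 / L)]
    rw [h1, h2] at hub
    have : L / 2 * ((1 / L) ^ 2 * ‖g k‖ ^ 2) - (1 / L) * ‖g k‖ ^ 2
        = -(1 / (2 * L)) * ‖g k‖ ^ 2 := by field_simp; ring
    nlinarith [hub]
  -- f (xhat k) ≤ f (x k)
  have hhat_le : ∀ k, f (xhat k) ≤ f (x k) := by
    intro k
    have := hhatmin k 1 0
    simpa using this
  -- monotone decrease
  have hstep_le : ∀ k, f (x (k + 1)) ≤ f (xhat k) := by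
    intro k
    have h := hdesc k
    have hnn : 0 ≤ 1 / (2 * L) * ‖g k‖ ^ 2 :=
      mul_nonneg (by positivity) (sq_nonneg _)
    linarith
  have hmono : ∀ j k : ℕ, j ≤ k → f (x k) ≤ f (x j) := by
    have : Antitone (fun k => f (x k)) := by
      apply antitone_nat_of_succ_le
      intro k
      exact (hstep_le k).trans (hhat_le k)
    intro j k h; exact this h
  -- q as sum of gradients
  have hqsum : ∀ k, q k = ∑ i ∈ Finset.range k, g i := by
    intro k
    induction k with
    | zero => simp [hq0]
    | succ m ih => rw [hqrec m, ih, Finset.sum_range_succ]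
  -- norm of q
  have hqnorm : ∀ k, ‖q k‖ ^ 2 = ∑ i ∈ Finset.range k, ‖g i‖ ^ 2 := by
    intro k
    induction k with
    | zero => simp [hq0]
    | succ m ih =>
      rw [hqrec m, Finset.sum_range_succ, ← ih]
      have := norm_add_sq_real (q m) (g m)
      rw [real_inner_comm] at this
      rw [this, (horth m).2]; ring
  set Δ : ℝ := f (x 0) - fstar with hΔ
  set δ : ℝ := f (x T) - fstar with hδ
  set R : ℝ := ‖x 0 - xstar‖ with hR
  clear_value Δ δ R
  have hδ0 : 0 ≤ δ := by simp only [hδ]; linarith [hfstar_le (x T)]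
  have hδΔ : δ ≤ Δ := by have := hmono 0 T (Nat.zero_le T); simp only [hΔ, hδ]; linarith
  -- xhat values stay above f (x T)
  have hxhat_ge : ∀ k < T, δ ≤ f (xhat k) - fstar := by
    intro k hk
    have h1 := hstep_le k
    have h2 := hmono (k + 1) T hk
    simp only [hδ]; linarith
  -- key sum inequality
  have hsum1 : (T : ℝ) * (α * δ) ≤ ⟪q T, x 0 - xstar⟫ := by
    rw [hqsum T, sum_inner]
    have hterm : ∀ k ∈ Finset.range T, α * δ ≤ ⟪g k, x 0 - xstar⟫ := by
      intro k hk
      rw [Finset.mem_range] at hk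
      have h1 : α * (f (xhat k) - fstar) ≤ ⟪g k, xhat k - xstar⟫ := hwqc (xhat k)
      have h2 : ⟪g k, xhat k - xstar⟫ = ⟪g k, xhat k - x 0⟫ + ⟪g k, x 0 - xstar⟫ := by
        rw [← inner_add_right]; congr 1; abel
      rw [h2, horth3 k, zero_add] at h1
      have h3 : α * δ ≤ α * (f (xhat k) - fstar) := by
        apply mul_le_mul_of_nonneg_left (hxhat_ge k hk) hα0.le
      linarith
    calc (T : ℝ) * (α * δ) = ∑ _k ∈ Finset.range T, α * δ := by
          rw [Finset.sum_const, Finset.card_range, nsmul_eq_mul]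
      _ ≤ ∑ k ∈ Finset.range T, ⟪g k, x 0 - xstar⟫ := Finset.sum_le_sum hterm
  have hsum2 : ⟪q T, x 0 - xstar⟫ ≤ ‖q T‖ * R := by
    rw [hR]; exact real_inner_le_norm _ _
  -- bound on ‖q T‖²
  have hqT : ‖q T‖ ^ 2 ≤ 2 * L * (Δ - δ) := by
    rw [hqnorm T]
    have h1 : ∀ k ∈ Finset.range T, ‖g k‖ ^ 2 ≤ 2 * L * (f (x k) - f (x (k + 1))) := by
      intro k _
      have hd := hdesc k
      have hh := hhat_le k
      have : 1 / (2 * L) * ‖g k‖ ^ 2 ≤ f (x k) - f (x (k + 1)) := by linarith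
      have h2L : (0:ℝ) < 2 * L := by linarith
      calc ‖g k‖ ^ 2 = 2 * L * (1 / (2 * L) * ‖g k‖ ^ 2) := by field_simp
        _ ≤ 2 * L * (f (x k) - f (x (k + 1))) := by
            apply mul_le_mul_of_nonneg_left this h2L.le
    calc ∑ i ∈ Finset.range T, ‖g i‖ ^ 2
        ≤ ∑ k ∈ Finset.range T, 2 * L * (f (x k) - f (x (k + 1))) :=
          Finset.sum_le_sum h1
      _ = 2 * L * (f (x 0) - f (x T)) := by
          rw [← Finset.mul_sum, Finset.sum_range_sub' (fun k => f (x k)) T]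
      _ = 2 * L * (Δ - δ) := by simp only [hΔ, hδ]; ring
  -- bound on R²
  have hR2 : R ^ 2 ≤ 2 * Δ / μ := by
    have := hQG (x 0)
    rw [← hxstar] at this
    simp only [hR, hΔ]
    rw [le_div_iff₀ hμ]
    nlinarith [this]
  have hRnn : 0 ≤ R := by rw [hR]; exact norm_nonneg _
  have hqTnn : 0 ≤ ‖q T‖ := norm_nonneg _
  -- T is large
  have hTlb : (4 / (3 * α)) * Real.sqrt (L / μ) ≤ (T : ℝ) := by
    rw [hT]; exact Nat.le_ceil _
  have hsqrt : Real.sqrt (L / μ) ^ 2 = L / μ := Real.sq_sqrt (by positivity)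
  have hTα : (4 / 3) * Real.sqrt (L / μ) ≤ (T : ℝ) * α := by
    have := mul_le_mul_of_nonneg_left hTlb hα0.le
    calc (4 / 3) * Real.sqrt (L / μ) = α * ((4 / (3 * α)) * Real.sqrt (L / μ)) := by
          field_simp
      _ ≤ α * (T : ℝ) := this
      _ = (T : ℝ) * α := mul_comm _ _
  have hTα2 : (16 / 9) * (L / μ) ≤ ((T : ℝ) * α) ^ 2 := by
    have hnn : (0:ℝ) ≤ (4 / 3) * Real.sqrt (L / μ) := by positivity
    have hsq : ((4:ℝ) / 3 * Real.sqrt (L / μ)) ^ 2 ≤ ((T : ℝ) * α) ^ 2 :=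
      pow_le_pow_left₀ hnn hTα 2
    have he : ((4:ℝ) / 3 * Real.sqrt (L / μ)) ^ 2 = 16 / 9 * (L / μ) := by
      rw [mul_pow, hsqrt]; ring
    linarith
  -- combine
  have hkey : ((T : ℝ) * α * δ) ^ 2 ≤ 2 * L * (Δ - δ) * (2 * Δ / μ) := by
    have h1 : (T : ℝ) * α * δ ≤ ‖q T‖ * R := by
      have := hsum1.trans hsum2
      calc (T : ℝ) * α * δ = (T : ℝ) * (α * δ) := by ring
        _ ≤ ‖q T‖ * R := this
    have hlhs_nn : 0 ≤ (T : ℝ) * α * δ :=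
      mul_nonneg (mul_nonneg (Nat.cast_nonneg T) hα0.le) hδ0
    have h2 : ((T : ℝ) * α * δ) ^ 2 ≤ (‖q T‖ * R) ^ 2 := by
      apply sq_le_sq' (by linarith [mul_nonneg hqTnn hRnn]) h1
    calc ((T : ℝ) * α * δ) ^ 2 ≤ (‖q T‖ * R) ^ 2 := h2
      _ = ‖q T‖ ^ 2 * R ^ 2 := by ring
      _ ≤ 2 * L * (Δ - δ) * (2 * Δ / μ) :=
          mul_le_mul hqT hR2 (sq_nonneg R)
            (mul_nonneg (by linarith : (0:ℝ) ≤ 2 * L) (by linarith : (0:ℝ) ≤ Δ - δ))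
  -- final arithmetic
  have hLμ : (0:ℝ) < L / μ := by positivity
  have hΔnn : 0 ≤ Δ := by linarith
  have hfinal : 16 * δ ^ 2 ≤ 36 * Δ * (Δ - δ) := by
    have h1 : (16 / 9) * (L / μ) * δ ^ 2 ≤ ((T : ℝ) * α) ^ 2 * δ ^ 2 :=
      mul_le_mul_of_nonneg_right hTα2 (sq_nonneg δ)
    have h2 : ((T : ℝ) * α) ^ 2 * δ ^ 2 = ((T : ℝ) * α * δ) ^ 2 := by ring
    have h3 : (16 / 9) * (L / μ) * δ ^ 2 ≤ 2 * L * (Δ - δ) * (2 * Δ / μ) := by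
      rw [h2] at h1; linarith [hkey]
    have hμ' : μ ≠ 0 := ne_of_gt hμ
    have h4 := mul_le_mul_of_nonneg_right h3 hμ.le
    have e1 : (16 / 9) * (L / μ) * δ ^ 2 * μ = 16 / 9 * L * δ ^ 2 := by
      field_simp
    have e2 : 2 * L * (Δ - δ) * (2 * Δ / μ) * μ = 4 * L * Δ * (Δ - δ) := by
      field_simp; ring
    rw [e1, e2] at h4
    have h4' : L * (16 / 9 * δ ^ 2) ≤ L * (4 * Δ * (Δ - δ)) := by linarith [h4]
    have h5 : 16 / 9 * δ ^ 2 ≤ 4 * Δ * (Δ - δ) := le_of_mul_le_mul_left h4' hL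
    linarith
  -- conclude δ ≤ 3/4 Δ
  show δ ≤ 3 / 4 * Δ
  nlinarith [hfinal, hδ0, hΔnn, hδΔ]
end

section
/- Let f : ℝⁿ → ℝ be differentiable and L-smooth, with nonempty solution set X* and minimum value f*. Suppose f satisfies the quadratic growth condition with constant μ > 0 and is α-weakly-quasi-convex with respect to P(x) for every x ∈ ℝⁿ, for some α ∈ (0,1]. Set T = ⌈(4/(3α))·√(L/μ)⌉ and let (y_m) be the sequence of restarts obtained by running T iterations of Nemirovski's conjugate gradients method starting from y_{m−1} to produce y_m, with y_0 = x_0. Then for every natural number m, f(y_m) − f* ≤ (3/4)^m · (f(x_0) − f*); in particular, for any ε > 0, an accuracy of f(y) − f* ≤ ε·(f(x_0) − f*) is reached after at most ⌈log_{4/3}(1/ε)⌉ cycles of T iterations each. -/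
open scoped RealInnerProductSpace

private lemma cgLineDeriv {n : ℕ} (f : EuclideanSpace ℝ (Fin n) → ℝ)
    (hdiff : Differentiable ℝ f) (c v : EuclideanSpace ℝ (Fin n)) (t : ℝ) :
    HasDerivAt (fun s : ℝ => f (c + s • v)) ⟪gradient f (c + t • v), v⟫ t := by
  have h1 : HasDerivAt (fun s : ℝ => c + s • v) v t := by
    simpa using ((hasDerivAt_id t).smul_const v).const_add c
  have hf := (hdiff (c + t • v)).hasGradientAt.hasFDerivAt
  have := hf.comp_hasDerivAt t h1
  simp [InnerProductSpace.toDual_apply_apply] at this ⊢; exact this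

private lemma cgGradOrth {n : ℕ} (f : EuclideanSpace ℝ (Fin n) → ℝ)
    (hdiff : Differentiable ℝ f) (c v : EuclideanSpace ℝ (Fin n))
    (hmin : ∀ t : ℝ, f c ≤ f (c + t • v)) : ⟪gradient f c, v⟫ = 0 := by
  have hd : HasDerivAt (fun s : ℝ => f (c + s • v)) ⟪gradient f c, v⟫ 0 := by
    simpa using cgLineDeriv f hdiff c v 0
  have hloc : IsLocalMin (fun s : ℝ => f (c + s • v)) 0 := by
    apply IsMinOn.isLocalMin _ Filter.univ_mem
    intro t _
    simpa using hmin t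
  exact hloc.hasDerivAt_eq_zero hd

private lemma cgUpper {n : ℕ} (f : EuclideanSpace ℝ (Fin n) → ℝ)
    (hdiff : Differentiable ℝ f) (L : ℝ)
    (hsmooth : ∀ x y : EuclideanSpace ℝ (Fin n),
      ‖gradient f y - gradient f x‖ ≤ L * ‖y - x‖) (x v : EuclideanSpace ℝ (Fin n)) :
    f (x + v) ≤ f x + ⟪gradient f x, v⟫ + L / 2 * ‖v‖ ^ 2 := by
  set h : ℝ → ℝ := fun t => L * ‖v‖ ^ 2 / 2 * t ^ 2 + t * ⟪gradient f x, v⟫ - f (x + t • v) + f x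
    with hh
  have hder : ∀ t : ℝ, HasDerivAt h
      (L * ‖v‖ ^ 2 * t + ⟪gradient f x, v⟫ - ⟪gradient f (x + t • v), v⟫) t := by
    intro t
    have h1 : HasDerivAt (fun t : ℝ => L * ‖v‖ ^ 2 / 2 * t ^ 2) (L * ‖v‖ ^ 2 * t) t := by
      have := ((hasDerivAt_pow 2 t).const_mul (L * ‖v‖ ^ 2 / 2))
      exact this.congr_deriv (by ring)
    have h2 : HasDerivAt (fun t : ℝ => t * ⟪gradient f x, v⟫) ⟪gradient f x, v⟫ t := by
      simpa using (hasDerivAt_id t).mul_const (⟪gradient f x, v⟫)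
    exact ((h1.add h2).sub (cgLineDeriv f hdiff x v t)).add_const (f x)
  have hmono : MonotoneOn h (Set.Icc (0:ℝ) 1) := by
    apply monotoneOn_of_deriv_nonneg (convex_Icc 0 1)
    · intro t ht
      exact (hder t).differentiableAt.continuousAt.continuousWithinAt
    · intro t ht
      exact (hder t).differentiableAt.differentiableWithinAt
    · intro t ht
      rw [(hder t).deriv]
      have ht0 : (0:ℝ) ≤ t := (interior_subset (s := Set.Icc (0:ℝ) 1) ht).1
      have hb : ⟪gradient f (x + t • v), v⟫ - ⟪gradient f x, v⟫ ≤ L * ‖v‖ ^ 2 * t := by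
        rw [← inner_sub_left]
        calc ⟪gradient f (x + t • v) - gradient f x, v⟫
            ≤ ‖gradient f (x + t • v) - gradient f x‖ * ‖v‖ := real_inner_le_norm _ _
          _ ≤ L * ‖x + t • v - x‖ * ‖v‖ := by
              have := hsmooth x (x + t • v)
              exact mul_le_mul_of_nonneg_right this (norm_nonneg v)
          _ = L * ‖v‖ ^ 2 * t := by
              simp [norm_smul, abs_of_nonneg ht0]; ring
      linarith
  have h0 : h 0 = 0 := by simp [hh]
  have h1le : 0 ≤ h 1 := by
    have := hmono (Set.left_mem_Icc.2 zero_le_one) (Set.right_mem_Icc.2 zero_le_one) zero_le_one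
    simpa [h0] using this
  have : f (x + (1:ℝ) • v) ≤ L * ‖v‖ ^ 2 / 2 * 1 ^ 2 + 1 * ⟪gradient f x, v⟫ + f x := by
    simp only [hh] at h1le; linarith
  have hv : f (x + v) = f (x + (1:ℝ) • v) := by rw [one_smul]
  rw [hv]; linarith

private lemma cgDescent {n : ℕ} (f : EuclideanSpace ℝ (Fin n) → ℝ)
    (hdiff : Differentiable ℝ f) (L : ℝ) (hL : 0 < L)
    (hsmooth : ∀ x y : EuclideanSpace ℝ (Fin n),
      ‖gradient f y - gradient f x‖ ≤ L * ‖y - x‖) (x : EuclideanSpace ℝ (Fin n)) :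
    f (x - (1 / L) • gradient f x) ≤ f x - 1 / (2 * L) * ‖gradient f x‖ ^ 2 := by
  have h := cgUpper f hdiff L hsmooth x (-((1 / L) • gradient f x))
  have h1 : x + -((1 / L) • gradient f x) = x - (1 / L) • gradient f x := by abel
  have h2 : ⟪gradient f x, -((1 / L) • gradient f x)⟫ = -(1 / L) * ‖gradient f x‖ ^ 2 := by
    rw [inner_neg_right, real_inner_smul_right, real_inner_self_eq_norm_sq]; ring
  have h3 : ‖-((1 / L) • gradient f x)‖ ^ 2 = (1 / L) ^ 2 * ‖gradient f x‖ ^ 2 := by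
    rw [norm_neg, norm_smul, Real.norm_eq_abs, abs_of_pos (one_div_pos.mpr hL)]
    rw [mul_pow]
  rw [h1, h2, h3] at h
  have hL' : L ≠ 0 := ne_of_gt hL
  calc f (x - (1 / L) • gradient f x)
      ≤ f x + -(1 / L) * ‖gradient f x‖ ^ 2 + L / 2 * ((1 / L) ^ 2 * ‖gradient f x‖ ^ 2) := h
    _ = f x - 1 / (2 * L) * ‖gradient f x‖ ^ 2 := by field_simp; ring

private lemma cgCycle {n : ℕ} (f : EuclideanSpace ℝ (Fin n) → ℝ)
    (hdiff : Differentiable ℝ f) (L : ℝ) (hL : 0 < L)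
    (hsmooth : ∀ x y : EuclideanSpace ℝ (Fin n),
      ‖gradient f y - gradient f x‖ ≤ L * ‖y - x‖)
    (fstar : ℝ) (hfmin : ∀ x, fstar ≤ f x)
    (μ : ℝ) (hμ : 0 < μ) (α : ℝ) (hα0 : 0 < α)
    (z q xhat : ℕ → EuclideanSpace ℝ (Fin n)) (T : ℕ)
    (hq0 : q 0 = 0)
    (hhatmem : ∀ k, ∃ a b : ℝ, xhat k = z 0 + a • (z k - z 0) + b • q k)
    (hhatmin : ∀ (k : ℕ) (a b : ℝ), f (xhat k) ≤ f (z 0 + a • (z k - z 0) + b • q k))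
    (hstep : ∀ k, z (k + 1) = xhat k - (1 / L) • gradient f (xhat k))
    (hqrec : ∀ k, q (k + 1) = q k + gradient f (xhat k))
    (xstar : EuclideanSpace ℝ (Fin n))
    (hwqc : ∀ k, α * (f (xhat k) - fstar) ≤ ⟪gradient f (xhat k), xhat k - xstar⟫)
    (hR2 : ‖z 0 - xstar‖ ^ 2 ≤ 2 / μ * (f (z 0) - fstar))
    (hT : 4 / (3 * α) * Real.sqrt (L / μ) ≤ (T : ℝ)) :
    f (z T) - fstar ≤ 3 / 4 * (f (z 0) - fstar) := by
  have orthv : ∀ k, ⟪gradient f (xhat k), z k - z 0⟫ = 0 := by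
    intro k
    obtain ⟨a, b, hab⟩ := hhatmem k
    apply cgGradOrth f hdiff
    intro t
    have he : xhat k + t • (z k - z 0) = z 0 + (a + t) • (z k - z 0) + b • q k := by
      rw [hab]; module
    rw [he]
    exact hhatmin k (a + t) b
  have orthq : ∀ k, ⟪gradient f (xhat k), q k⟫ = 0 := by
    intro k
    obtain ⟨a, b, hab⟩ := hhatmem k
    apply cgGradOrth f hdiff
    intro t
    have he : xhat k + t • q k = z 0 + a • (z k - z 0) + (b + t) • q k := by
      rw [hab]; module
    rw [he]
    exact hhatmin k a (b + t)
  have orthx : ∀ k, ⟪gradient f (xhat k), xhat k - z 0⟫ = 0 := by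
    intro k
    obtain ⟨a, b, hab⟩ := hhatmem k
    have he : xhat k - z 0 = a • (z k - z 0) + b • q k := by rw [hab]; module
    rw [he, inner_add_right, real_inner_smul_right, real_inner_smul_right, orthv k, orthq k]
    ring
  have hqsum : ∀ k, q k = ∑ i ∈ Finset.range k, gradient f (xhat i) := by
    intro k
    induction k with
    | zero => simpa using hq0
    | succ k ih => rw [hqrec, ih, Finset.sum_range_succ]
  have hqn : ∀ k, ‖q k‖ ^ 2 = ∑ i ∈ Finset.range k, ‖gradient f (xhat i)‖ ^ 2 := by
    intro k
    induction k with
    | zero => simp [hq0]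
    | succ k ih =>
      rw [hqrec, Finset.sum_range_succ, ← ih, norm_add_sq_real, real_inner_comm, orthq k]
      ring
  have hxz : ∀ k, f (xhat k) ≤ f (z k) := by
    intro k
    have he : z 0 + (1:ℝ) • (z k - z 0) + (0:ℝ) • q k = z k := by module
    have := hhatmin k 1 0
    rwa [he] at this
  have hdes : ∀ k, f (z (k + 1)) ≤ f (xhat k) - 1 / (2 * L) * ‖gradient f (xhat k)‖ ^ 2 := by
    intro k
    rw [hstep k]
    exact cgDescent f hdiff L hL hsmooth (xhat k)
  have hzmono : ∀ k, f (z (k + 1)) ≤ f (z k) := by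
    intro k
    have h1 := hdes k
    have h2 := hxz k
    have h3 : 0 ≤ 1 / (2 * L) * ‖gradient f (xhat k)‖ ^ 2 := by positivity
    linarith
  have hmonole : ∀ k l, k ≤ l → f (z l) ≤ f (z k) := by
    intro k l hkl
    induction l, hkl using Nat.le_induction with
    | base => exact le_refl _
    | succ l hkl ih => exact le_trans (hzmono l) ih
  have hdes2 : ∀ k, ‖gradient f (xhat k)‖ ^ 2 ≤ 2 * L * (f (xhat k) - f (z (k + 1))) := by
    intro k
    have h := hdes k
    have h2 : (0:ℝ) < 2 * L := by linarith
    have h3 : ‖gradient f (xhat k)‖ ^ 2 / (2 * L) ≤ f (xhat k) - f (z (k + 1)) := by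
      rw [div_eq_mul_inv, mul_comm, ← one_div]
      linarith
    have := (div_le_iff₀ h2).mp h3
    linarith
  have hsum : ∀ k, ∑ i ∈ Finset.range k, ‖gradient f (xhat i)‖ ^ 2
      ≤ 2 * L * (f (z 0) - f (z k)) := by
    intro k
    induction k with
    | zero => simp
    | succ k ih =>
      rw [Finset.sum_range_succ]
      have h1 := hdes2 k
      have h2 := hxz k
      nlinarith [hL.le]
  have hwqc2 : ∀ k, α * (f (xhat k) - fstar) ≤ ⟪gradient f (xhat k), z 0 - xstar⟫ := by
    intro k
    have h := hwqc k
    have hsplit : xhat k - xstar = (xhat k - z 0) + (z 0 - xstar) := by abel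
    rw [hsplit, inner_add_right, orthx k, zero_add] at h
    exact h
  have hkey : α * ((T : ℝ) * (f (z T) - fstar)) ≤ ‖q T‖ * ‖z 0 - xstar‖ := by
    have h1 : ∀ k ∈ Finset.range T,
        α * (f (z T) - fstar) ≤ ⟪gradient f (xhat k), z 0 - xstar⟫ := by
      intro k hk
      refine le_trans ?_ (hwqc2 k)
      have hk' := Finset.mem_range.mp hk
      have h2 : f (z T) ≤ f (z (k + 1)) := hmonole (k + 1) T hk'
      have h3 := hdes k
      have h4 : 0 ≤ 1 / (2 * L) * ‖gradient f (xhat k)‖ ^ 2 := by positivity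
      have h5 : f (z T) - fstar ≤ f (xhat k) - fstar := by linarith
      exact mul_le_mul_of_nonneg_left h5 hα0.le
    calc α * ((T : ℝ) * (f (z T) - fstar))
        = ∑ _k ∈ Finset.range T, α * (f (z T) - fstar) := by
          rw [Finset.sum_const, Finset.card_range, nsmul_eq_mul]; ring
      _ ≤ ∑ k ∈ Finset.range T, ⟪gradient f (xhat k), z 0 - xstar⟫ := Finset.sum_le_sum h1
      _ = ⟪q T, z 0 - xstar⟫ := by rw [hqsum T, sum_inner]
      _ ≤ ‖q T‖ * ‖z 0 - xstar‖ := real_inner_le_norm _ _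
  -- numeric conclusion
  by_contra hcon
  push_neg at hcon
  set A := f (z 0) - fstar with hA
  set B := f (z T) - fstar with hB
  have hB0 : 0 ≤ B := by have := hfmin (z T); rw [hB]; linarith
  have hBA : B ≤ A := by
    have := hmonole 0 T (Nat.zero_le T)
    rw [hA, hB]; linarith
  have hA0 : 0 < A := by linarith
  have hs : 0 < Real.sqrt (L / μ) := Real.sqrt_pos.mpr (div_pos hL hμ)
  have hαT : 4 / 3 * Real.sqrt (L / μ) ≤ α * T := by
    have h := mul_le_mul_of_nonneg_left hT hα0.le
    have he : α * (4 / (3 * α) * Real.sqrt (L / μ)) = 4 / 3 * Real.sqrt (L / μ) := by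
      field_simp
    linarith [he ▸ h]
  have hαT0 : 0 < α * T := lt_of_lt_of_le (by positivity) hαT
  have hlow : Real.sqrt (L / μ) * A < α * ((T : ℝ) * B) := by
    calc Real.sqrt (L / μ) * A = (4 / 3 * Real.sqrt (L / μ)) * (3 / 4 * A) := by ring
      _ ≤ (α * T) * (3 / 4 * A) := by
          apply mul_le_mul_of_nonneg_right hαT
          linarith
      _ < (α * T) * B := by exact mul_lt_mul_of_pos_left hcon hαT0
      _ = α * ((T : ℝ) * B) := by ring
  have hSb : ∑ i ∈ Finset.range T, ‖gradient f (xhat i)‖ ^ 2 ≤ L * A / 2 := by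
    have h1 := hsum T
    have h2 : f (z 0) - f (z T) = A - B := by rw [hA, hB]; ring
    rw [h2] at h1
    nlinarith [mul_le_mul_of_nonneg_left hcon.le hL.le]
  have hq_le : ‖q T‖ ≤ Real.sqrt (L * A / 2) := by
    rw [← Real.sqrt_sq (norm_nonneg (q T)), hqn T]
    exact Real.sqrt_le_sqrt hSb
  have hR_le : ‖z 0 - xstar‖ ≤ Real.sqrt (2 / μ * A) := by
    rw [← Real.sqrt_sq (norm_nonneg (z 0 - xstar))]
    exact Real.sqrt_le_sqrt hR2
  have hprod : ‖q T‖ * ‖z 0 - xstar‖ ≤ Real.sqrt (L / μ) * A := by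
    have hnn : (0:ℝ) ≤ L * A / 2 := by positivity
    calc ‖q T‖ * ‖z 0 - xstar‖
        ≤ Real.sqrt (L * A / 2) * Real.sqrt (2 / μ * A) :=
          mul_le_mul hq_le hR_le (norm_nonneg _) (Real.sqrt_nonneg _)
      _ = Real.sqrt (L * A / 2 * (2 / μ * A)) := (Real.sqrt_mul hnn _).symm
      _ = Real.sqrt (L / μ * A ^ 2) := by
          congr 1
          field_simp
      _ = Real.sqrt (L / μ) * A := by
          rw [Real.sqrt_mul (by positivity), Real.sqrt_sq hA0.le]
  exact absurd (lt_of_lt_of_le hlow (le_trans hkey hprod)) (lt_irrefl _)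

theorem nemirovski_cg_restart_convergence
    (n : ℕ) (f : EuclideanSpace ℝ (Fin n) → ℝ)
    (hdiff : Differentiable ℝ f)
    (L : ℝ) (hL : 0 < L)
    (hsmooth : ∀ x y : EuclideanSpace ℝ (Fin n),
      ‖gradient f y - gradient f x‖ ≤ L * ‖y - x‖)
    (Xstar : Set (EuclideanSpace ℝ (Fin n)))
    (hXstar : Xstar = {z | ∀ y, f z ≤ f y})
    (hne : Xstar.Nonempty)
    (fstar : ℝ) (hfstar : ∀ z ∈ Xstar, f z = fstar)
    -- P is the projection onto the solution set
    (P : EuclideanSpace ℝ (Fin n) → EuclideanSpace ℝ (Fin n))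
    (hPmem : ∀ x, P x ∈ Xstar)
    (hPproj : ∀ x, ∀ z ∈ Xstar, ‖x - P x‖ ≤ ‖x - z‖)
    -- quadratic growth
    (μ : ℝ) (hμ : 0 < μ)
    (hQG : ∀ x, f x - fstar ≥ μ / 2 * ‖x - P x‖ ^ 2)
    -- α-weak-quasi-convexity with respect to P x for every x
    (α : ℝ) (hα : α ∈ Set.Ioc (0 : ℝ) 1)
    (hwqc : ∀ x z : EuclideanSpace ℝ (Fin n),
      α * (f z - fstar) ≤ ⟪gradient f z, z - P x⟫)
    -- number of iterations per cycle
    (T : ℕ) (hT : T = ⌈(4 / (3 * α)) * Real.sqrt (L / μ)⌉₊)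
    -- the sequence of restart points, y (m+1) obtained from y m by one
    -- cycle of T iterations of Nemirovski's conjugate gradients method
    (x0 : EuclideanSpace ℝ (Fin n))
    (y : ℕ → EuclideanSpace ℝ (Fin n)) (hy0 : y 0 = x0)
    (z q xhat : ℕ → ℕ → EuclideanSpace ℝ (Fin n))
    (hz0 : ∀ m : ℕ, z m 0 = y m)
    (hq0 : ∀ m : ℕ, q m 0 = 0)
    (hhatmem : ∀ (m k : ℕ), ∃ a b : ℝ,
      xhat m k = z m 0 + a • (z m k - z m 0) + b • q m k)
    (hhatmin : ∀ (m k : ℕ) (a b : ℝ),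
      f (xhat m k) ≤ f (z m 0 + a • (z m k - z m 0) + b • q m k))
    (hstep : ∀ m k : ℕ, z m (k + 1) = xhat m k - (1 / L) • gradient f (xhat m k))
    (hqrec : ∀ m k : ℕ, q m (k + 1) = q m k + gradient f (xhat m k))
    (hrestart : ∀ m : ℕ, y (m + 1) = z m T) :
    (∀ m : ℕ, f (y m) - fstar ≤ (3 / 4) ^ m * (f x0 - fstar)) ∧
      ∀ ε : ℝ, 0 < ε →
        f (y ⌈Real.logb (4 / 3) (1 / ε)⌉₊) - fstar ≤ ε * (f x0 - fstar) := by
  obtain ⟨zs, hzs⟩ := hne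
  have hzsval := hfstar zs hzs
  rw [hXstar] at hzs
  have hfmin : ∀ x, fstar ≤ f x := by
    intro x
    rw [← hzsval]
    exact hzs x
  have hcycle : ∀ m : ℕ, f (y (m + 1)) - fstar ≤ 3 / 4 * (f (y m) - fstar) := by
    intro m
    have hR2 : ‖z m 0 - P (y m)‖ ^ 2 ≤ 2 / μ * (f (z m 0) - fstar) := by
      rw [hz0 m]
      have hμ2 : (0:ℝ) < 2 / μ := by positivity
      have h1 : μ / 2 * ‖y m - P (y m)‖ ^ 2 ≤ f (y m) - fstar := ge_iff_le.mp (hQG (y m))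
      have h2 : ‖y m - P (y m)‖ ^ 2 = 2 / μ * (μ / 2 * ‖y m - P (y m)‖ ^ 2) := by
        field_simp
      rw [h2]
      exact mul_le_mul_of_nonneg_left h1 hμ2.le
    have hwqc' : ∀ k, α * (f (xhat m k) - fstar)
        ≤ ⟪gradient f (xhat m k), xhat m k - P (y m)⟫ := fun k => hwqc (y m) (xhat m k)
    have hT' : 4 / (3 * α) * Real.sqrt (L / μ) ≤ (T : ℝ) := by
      rw [hT]
      exact Nat.le_ceil _
    have := cgCycle f hdiff L hL hsmooth fstar hfmin μ hμ α hα.1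
      (z m) (q m) (xhat m) T (hq0 m) (hhatmem m) (hhatmin m) (hstep m) (hqrec m)
      (P (y m)) hwqc' hR2 hT'
    rw [hz0 m, ← hrestart m] at this
    exact this
  have hpart1 : ∀ m : ℕ, f (y m) - fstar ≤ (3 / 4) ^ m * (f x0 - fstar) := by
    intro m
    induction m with
    | zero => simp [hy0]
    | succ m ih =>
      have h1 := hcycle m
      have h2 : (3:ℝ) / 4 * (f (y m) - fstar) ≤ 3 / 4 * ((3 / 4) ^ m * (f x0 - fstar)) := by
        apply mul_le_mul_of_nonneg_left ih
        norm_num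
      calc f (y (m + 1)) - fstar ≤ 3 / 4 * ((3 / 4) ^ m * (f x0 - fstar)) := le_trans h1 h2
        _ = (3 / 4) ^ (m + 1) * (f x0 - fstar) := by ring
  refine ⟨hpart1, ?_⟩
  intro ε hε
  set M := ⌈Real.logb (4 / 3) (1 / ε)⌉₊ with hM
  have hD0 : 0 ≤ f x0 - fstar := by have := hfmin x0; linarith
  have h34 : ((3:ℝ) / 4) ^ M ≤ ε := by
    rcases le_or_gt (1 / ε) 1 with h | h
    · have hε1 : 1 ≤ ε := by
        rw [div_le_one hε] at h
        exact h
      calc ((3:ℝ) / 4) ^ M ≤ 1 := pow_le_one₀ (by norm_num) (by norm_num)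
        _ ≤ ε := hε1
    · have hlog : Real.logb (4 / 3) (1 / ε) ≤ (M : ℝ) := Nat.le_ceil _
      have hb : (1:ℝ) < 4 / 3 := by norm_num
      have heq : ((4:ℝ) / 3) ^ (Real.logb (4 / 3) (1 / ε)) = 1 / ε :=
        Real.rpow_logb (by norm_num) (by norm_num) (by positivity)
      have hle : (1:ℝ) / ε ≤ ((4:ℝ) / 3) ^ (M : ℝ) := by
        rw [← heq]
        exact Real.rpow_le_rpow_left_iff hb |>.mpr hlog
      have hle' : (1:ℝ) / ε ≤ ((4:ℝ) / 3) ^ M := by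
        rw [← Real.rpow_natCast ((4:ℝ) / 3) M]
        exact hle
      have hp : (0:ℝ) < ((4:ℝ) / 3) ^ M := by positivity
      have h34eq : ((3:ℝ) / 4) ^ M = (((4:ℝ) / 3) ^ M)⁻¹ := by
        rw [show ((3:ℝ) / 4) = ((4:ℝ) / 3)⁻¹ by norm_num, inv_pow]
      rw [h34eq, inv_eq_one_div, div_le_iff₀ hp]
      rw [div_le_iff₀ hε] at hle'
      nlinarith
  calc f (y M) - fstar ≤ (3 / 4) ^ M * (f x0 - fstar) := hpart1 M
    _ ≤ ε * (f x0 - fstar) := mul_le_mul_of_nonneg_right h34 hD0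
end

section
/- The function f : ℝ → ℝ defined by f(x) = |x|·(1 − e^{−|x|}) is differentiable, has 0 as its unique global minimizer with f(0) = 0, is 1-weakly-quasi-convex with respect to 0 (i.e., f(x) ≤ f'(x)·x for all x ∈ ℝ), but is not convex on ℝ. -/
open Real Filter Asymptotics

private lemma hd_pos {x : ℝ} (hx : 0 < x) :
    HasDerivAt (fun y : ℝ => |y| * (1 - Real.exp (-|y|)))
      ((1 - Real.exp (-x)) + x * Real.exp (-x)) x := by
  have h1 : HasDerivAt (fun y : ℝ => 1 - Real.exp (-y)) (Real.exp (-x)) x := by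
    have h2 := (Real.hasDerivAt_exp (-x)).comp x (hasDerivAt_neg x)
    simpa using (hasDerivAt_const x (1:ℝ)).fun_sub h2
  have h : HasDerivAt (fun y : ℝ => y * (1 - Real.exp (-y)))
      ((1 - Real.exp (-x)) + x * Real.exp (-x)) x := by
    simpa using (hasDerivAt_id x).fun_mul h1
  refine h.congr_of_eventuallyEq ?_
  filter_upwards [eventually_gt_nhds hx] with y hy
  rw [abs_of_pos hy]

private lemma hd_neg {x : ℝ} (hx : x < 0) :
    HasDerivAt (fun y : ℝ => |y| * (1 - Real.exp (-|y|)))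
      (-(1 - Real.exp x) + x * Real.exp x) x := by
  have h1 : HasDerivAt (fun y : ℝ => 1 - Real.exp y) (-Real.exp x) x := by
    simpa using (hasDerivAt_const x (1:ℝ)).fun_sub (Real.hasDerivAt_exp x)
  have h : HasDerivAt (fun y : ℝ => -y * (1 - Real.exp y))
      (-(1 - Real.exp x) + x * Real.exp x) x := by
    have := ((hasDerivAt_id x).neg).mul h1
    refine this.congr_deriv ?_
    simp only [Pi.neg_apply, id_eq]
    ring
  refine h.congr_of_eventuallyEq ?_
  filter_upwards [eventually_lt_nhds hx] with y hy
  rw [abs_of_neg hy, neg_neg]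

private lemma hd_zero :
    HasDerivAt (fun y : ℝ => |y| * (1 - Real.exp (-|y|))) 0 0 := by
  rw [hasDerivAt_iff_tendsto_slope]
  apply squeeze_zero_norm (a := fun y : ℝ => |y|)
  · intro y
    have hb : 1 - Real.exp (-|y|) ≤ |y| := by
      have := Real.add_one_le_exp (-|y|)
      linarith
    have hb0 : 0 ≤ 1 - Real.exp (-|y|) := by
      have : Real.exp (-|y|) ≤ 1 := Real.exp_le_one_iff.mpr (neg_nonpos.mpr (abs_nonneg _))
      linarith
    rcases eq_or_ne y 0 with rfl | hy
    · simp [slope]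
    · rw [slope_def_field]
      simp only [abs_zero, mul_zero, zero_mul, sub_zero]
      rw [Real.norm_eq_abs, abs_div, abs_mul, abs_abs, abs_of_nonneg hb0]
      rw [div_le_iff₀ (abs_pos.mpr hy)]
      calc |y| * (1 - Real.exp (-|y|)) ≤ |y| * |y| := by
            exact mul_le_mul_of_nonneg_left hb (abs_nonneg y)
        _ = |y| * |y| := rfl
  · exact (continuous_abs.tendsto' 0 0 (by simp)).mono_left nhdsWithin_le_nhds

theorem abs_one_sub_exp_wqc_not_convex :
    let f : ℝ → ℝ := fun x => |x| * (1 - Real.exp (-|x|))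
    Differentiable ℝ f ∧
      f 0 = 0 ∧
      (∀ x : ℝ, f 0 ≤ f x) ∧
      (∀ x : ℝ, x ≠ 0 → f 0 < f x) ∧
      (∀ x : ℝ, f x ≤ deriv f x * x) ∧
      ¬ ConvexOn ℝ Set.univ f := by
  intro f
  have hderiv : ∀ x : ℝ, HasDerivAt f
      (if 0 < x then (1 - Real.exp (-x)) + x * Real.exp (-x)
       else if x < 0 then -(1 - Real.exp x) + x * Real.exp x
       else 0) x := by
    intro x
    rcases lt_trichotomy x 0 with hx | rfl | hx
    · simpa [hx, not_lt.mpr hx.le, hx.ne] using hd_neg hx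
    · simpa using hd_zero
    · simpa [hx] using hd_pos hx
  have hdiff : Differentiable ℝ f := fun x => (hderiv x).differentiableAt
  have hnn : ∀ x : ℝ, 0 ≤ f x := by
    intro x
    have : Real.exp (-|x|) ≤ 1 := Real.exp_le_one_iff.mpr (neg_nonpos.mpr (abs_nonneg _))
    have := abs_nonneg x
    simp only [f]
    nlinarith
  refine ⟨hdiff, by simp [f], fun x => by simpa [f] using hnn x, ?_, ?_, ?_⟩
  · intro x hx
    have h1 : Real.exp (-|x|) < 1 := by
      rw [Real.exp_lt_one_iff]
      simpa using abs_pos.mpr hx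
    have h2 : 0 < |x| := abs_pos.mpr hx
    simp only [f, abs_zero, neg_zero, Real.exp_zero, sub_self, mul_zero]
    nlinarith
  · intro x
    rw [(hderiv x).deriv]
    rcases lt_trichotomy x 0 with hx | rfl | hx
    · simp only [f, if_neg (not_lt.mpr hx.le), if_pos hx, abs_of_neg hx, neg_neg]
      nlinarith [Real.exp_pos x, mul_nonneg (sq_nonneg x) (Real.exp_pos x).le]
    · simp [f]
    · simp only [f, if_pos hx, abs_of_pos hx]
      nlinarith [Real.exp_pos (-x), sq_nonneg x, mul_nonneg (sq_nonneg x) (Real.exp_pos (-x)).le]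
  · intro hc
    have h := hc.2 (Set.mem_univ (3:ℝ)) (Set.mem_univ (5:ℝ))
      (by norm_num : (0:ℝ) ≤ 1/2) (by norm_num : (0:ℝ) ≤ 1/2) (by norm_num)
    have h3 : (1/2 : ℝ) • (3:ℝ) + (1/2 : ℝ) • (5:ℝ) = 4 := by norm_num
    rw [h3] at h
    simp only [f, smul_eq_mul] at h
    rw [show |(4:ℝ)| = 4 by norm_num, show |(3:ℝ)| = 3 by norm_num,
      show |(5:ℝ)| = 5 by norm_num] at h
    -- h : 4 * (1 - exp (-4)) ≤ 1/2 * (3 * (1 - exp (-3))) + 1/2 * (5 * (1 - exp (-5)))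
    -- i.e. 3 exp(-3) + 5 exp(-5) ≤ 8 exp(-4), i.e. 3 e² + 5 ≤ 8 e, false
    have hb0 : (0:ℝ) < Real.exp (-1) := Real.exp_pos _
    have hb : Real.exp (-1) < 0.37 := by
      have h1 := Real.exp_one_gt_d9
      have h2 : Real.exp (-1) * Real.exp 1 = 1 := by
        rw [← Real.exp_add]; norm_num
      nlinarith
    have e3 : Real.exp (-3) = Real.exp (-1) ^ (3:ℕ) := by
      rw [← Real.exp_nat_mul]; norm_num
    have e4 : Real.exp (-4) = Real.exp (-1) ^ (4:ℕ) := by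
      rw [← Real.exp_nat_mul]; norm_num
    have e5 : Real.exp (-5) = Real.exp (-1) ^ (5:ℕ) := by
      rw [← Real.exp_nat_mul]; norm_num
    rw [e3, e4, e5] at h
    nlinarith [pow_pos hb0 3, pow_pos hb0 4, pow_pos hb0 5, sq_nonneg (Real.exp (-1))]
end
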